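/- Fix δ ∈ (0,1). There exists ε₀ > 0 such that for every ε ∈ (0, ε₀) there is N₀ with the following property for all integers N ≥ N₀: write ρ := 1 − N^{−δ}, and let K_ε ∈ ℕ satisfy ( ρ(1−ρ) )^{1/2^{K_ε}} ≤ ε ≤ ( ρ(1−ρ) )^{1/2^{K_ε+1}}. Then p_{K_ε}^{(N,δ)} ≥ ρ · (1 − 3ε/√ρ)² · ε². -/

import Mathlib

open Filter Finset

namespace MullerRatchet18

/-- Auxiliary recursion computing the pair `(p_k, Σ_{ℓ≤k} p_ℓ)` of the equilibrium
type-frequency weights of the tournament ratchet. -/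
noncomputable def pAux (ρ : ℝ) : ℕ → ℝ × ℝ
  | 0 => (1 - ρ, 1 - ρ)
  | k+1 =>
    let a := ρ - 1 + 2 * (pAux ρ k).2
    let p := -(1/2) * a + Real.sqrt ((1/4) * a^2 + ρ * (pAux ρ k).1)
    (p, (pAux ρ k).2 + p)

/-- The equilibrium weight `p_k^{(ρ)}`. -/
noncomputable def pseq (ρ : ℝ) (k : ℕ) : ℝ := (pAux ρ k).1

lemma pAux_succ (ρ : ℝ) (k : ℕ) :
    pAux ρ (k+1) =
      (-(1/2) * (ρ - 1 + 2 * (pAux ρ k).2)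
        + Real.sqrt ((1/4) * (ρ - 1 + 2 * (pAux ρ k).2)^2 + ρ * (pAux ρ k).1),
       (pAux ρ k).2 + (-(1/2) * (ρ - 1 + 2 * (pAux ρ k).2)
        + Real.sqrt ((1/4) * (ρ - 1 + 2 * (pAux ρ k).2)^2 + ρ * (pAux ρ k).1))) := rfl

lemma pAux_nonneg {ρ : ℝ} (h0 : 0 ≤ ρ) (h1 : ρ ≤ 1) :
    ∀ k, 0 ≤ (pAux ρ k).1 ∧ 1 - ρ ≤ (pAux ρ k).2 := by
  intro k
  induction k with
  | zero =>
    constructor <;> simp [pAux] <;> linarith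
  | succ k ih =>
    obtain ⟨hp, hS⟩ := ih
    have ha0 : 0 ≤ ρ - 1 + 2 * (pAux ρ k).2 := by linarith
    have hcc : 0 ≤ ρ * (pAux ρ k).1 := mul_nonneg h0 hp
    have hsq : (1/2) * (ρ - 1 + 2 * (pAux ρ k).2)
        ≤ Real.sqrt ((1/4) * (ρ - 1 + 2 * (pAux ρ k).2)^2 + ρ * (pAux ρ k).1) := by
      have h2 : ((1/2) * (ρ - 1 + 2 * (pAux ρ k).2))^2
          ≤ (1/4) * (ρ - 1 + 2 * (pAux ρ k).2)^2 + ρ * (pAux ρ k).1 := by nlinarith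
      calc (1/2) * (ρ - 1 + 2 * (pAux ρ k).2)
          = Real.sqrt (((1/2) * (ρ - 1 + 2 * (pAux ρ k).2))^2) :=
            (Real.sqrt_sq (by linarith)).symm
        _ ≤ _ := Real.sqrt_le_sqrt h2
    have hpnext : 0 ≤ (pAux ρ (k+1)).1 := by
      rw [pAux_succ]; dsimp only; linarith
    refine ⟨hpnext, ?_⟩
    rw [pAux_succ]; dsimp only
    rw [pAux_succ] at hpnext; dsimp only at hpnext
    linarith

lemma pseq_succ_le {ρ : ℝ} (h0 : 0 ≤ ρ) (h1 : ρ ≤ 1) (k : ℕ) :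
    pseq ρ (k+1) ≤ Real.sqrt (ρ * pseq ρ k) := by
  obtain ⟨hp, hS⟩ := pAux_nonneg h0 h1 k
  have ha0 : 0 ≤ ρ - 1 + 2 * (pAux ρ k).2 := by linarith
  have hcc : 0 ≤ ρ * (pAux ρ k).1 := mul_nonneg h0 hp
  have hsq : Real.sqrt ((1/4) * (ρ - 1 + 2 * (pAux ρ k).2)^2 + ρ * (pAux ρ k).1)
      ≤ (1/2) * (ρ - 1 + 2 * (pAux ρ k).2) + Real.sqrt (ρ * (pAux ρ k).1) := by
    have h2 : (1/4) * (ρ - 1 + 2 * (pAux ρ k).2)^2 + ρ * (pAux ρ k).1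
        ≤ ((1/2) * (ρ - 1 + 2 * (pAux ρ k).2) + Real.sqrt (ρ * (pAux ρ k).1))^2 := by
      nlinarith [Real.sq_sqrt hcc, Real.sqrt_nonneg (ρ * (pAux ρ k).1),
        mul_nonneg ha0 (Real.sqrt_nonneg (ρ * (pAux ρ k).1))]
    calc Real.sqrt ((1/4) * (ρ - 1 + 2 * (pAux ρ k).2)^2 + ρ * (pAux ρ k).1)
        ≤ Real.sqrt (((1/2) * (ρ - 1 + 2 * (pAux ρ k).2) + Real.sqrt (ρ * (pAux ρ k).1))^2) :=
          Real.sqrt_le_sqrt h2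
      _ = _ := Real.sqrt_sq (add_nonneg (by linarith) (Real.sqrt_nonneg _))
  simp only [pseq, pAux_succ]
  linarith

lemma pseq_succ_ge {ρ : ℝ} (h0 : 0 ≤ ρ) (h1 : ρ ≤ 1) (k : ℕ) :
    Real.sqrt (ρ * pseq ρ k) - (pAux ρ k).2 ≤ pseq ρ (k+1) := by
  obtain ⟨hp, hS⟩ := pAux_nonneg h0 h1 k
  have hsq : Real.sqrt (ρ * (pAux ρ k).1)
      ≤ Real.sqrt ((1/4) * (ρ - 1 + 2 * (pAux ρ k).2)^2 + ρ * (pAux ρ k).1) :=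
    Real.sqrt_le_sqrt (by nlinarith [sq_nonneg (ρ - 1 + 2 * (pAux ρ k).2)])
  simp only [pseq, pAux_succ]
  linarith

set_option maxHeartbeats 1000000 in
/-- With `ρ = 1 − N^{−δ}` and `K_ε` defined by
`(ρ(1−ρ))^{1/2^{K_ε}} ≤ ε ≤ (ρ(1−ρ))^{1/2^{K_ε+1}}`, one has
`p_{K_ε}^{(N,δ)} ≥ ρ(1 − 3ε/√ρ)² ε²`. -/
theorem statement18 (δ : ℝ) (hδ0 : 0 < δ) (hδ1 : δ < 1) :
    ∃ ε₀ > (0:ℝ), ∀ ε : ℝ, 0 < ε → ε < ε₀ → ∃ N₀ : ℕ, ∀ N : ℕ, N₀ ≤ N →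
      ∀ Kε : ℕ,
        ((1 - (N:ℝ)^(-δ)) * (N:ℝ)^(-δ)) ^ (1 / (2:ℝ)^Kε) ≤ ε →
        ε ≤ ((1 - (N:ℝ)^(-δ)) * (N:ℝ)^(-δ)) ^ (1 / (2:ℝ)^(Kε+1)) →
        (1 - (N:ℝ)^(-δ)) * (1 - 3*ε / Real.sqrt (1 - (N:ℝ)^(-δ)))^2 * ε^2
          ≤ pseq (1 - (N:ℝ)^(-δ)) Kε := by
  refine ⟨1/100, by norm_num, ?_⟩
  intro ε hε hε'
  refine ⟨max 2 (⌈(ε⁻¹) ^ ((4:ℝ)/δ)⌉₊ + 1), ?_⟩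
  intro N hN Kε h1 h2
  have hN2 : (2:ℕ) ≤ N := le_trans (le_max_left _ _) hN
  have hN0 : (0:ℝ) < (N:ℝ) := by
    have : (0:ℕ) < N := by omega
    exact_mod_cast this
  set r : ℝ := (N:ℝ)^(-δ) with hrdef
  clear_value r
  have hr0 : 0 < r := by rw [hrdef]; exact Real.rpow_pos_of_pos hN0 _
  have hεle : ε ≤ 1/100 := le_of_lt hε'
  have hee : ε*ε ≤ (1/100)*ε := mul_le_mul_of_nonneg_right hεle hε.le
  have hε21 : ε^2 ≤ 1 := by linarith only [hee, hεle, hε]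
  have hre : r ≤ ε^4 := by
    have hx0 : (0:ℝ) < ε⁻¹ := inv_pos.2 hε
    have hceil : ((ε⁻¹) ^ ((4:ℝ)/δ) : ℝ) ≤ (N:ℝ) := by
      have h1' : ((⌈(ε⁻¹) ^ ((4:ℝ)/δ)⌉₊ : ℕ) : ℝ) ≤ (N:ℝ) := by
        have : ⌈(ε⁻¹) ^ ((4:ℝ)/δ)⌉₊ ≤ N := by
          have := le_trans (le_max_right 2 (⌈(ε⁻¹) ^ ((4:ℝ)/δ)⌉₊ + 1)) hN
          omega
        exact_mod_cast this
      exact le_trans (Nat.le_ceil _) h1'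
    have hmono : ((ε⁻¹) ^ ((4:ℝ)/δ))^δ ≤ (N:ℝ)^δ :=
      Real.rpow_le_rpow (le_of_lt (Real.rpow_pos_of_pos hx0 _)) hceil (le_of_lt hδ0)
    have hl : ((ε⁻¹) ^ ((4:ℝ)/δ))^δ = (ε^4)⁻¹ := by
      rw [← Real.rpow_mul hx0.le, div_mul_cancel₀ _ (ne_of_gt hδ0),
        Real.inv_rpow hε.le]
      norm_num
    rw [hl] at hmono
    have he4 : (0:ℝ) < ε^4 := by positivity
    calc r = ((N:ℝ)^δ)⁻¹ := by rw [hrdef, Real.rpow_neg hN0.le]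
      _ ≤ ((ε^4)⁻¹)⁻¹ := inv_anti₀ (by positivity) hmono
      _ = ε^4 := inv_inv _
  have he42 : ε^4 ≤ ε^2 := by
    have := mul_le_mul_of_nonneg_left hε21 (sq_nonneg ε)
    calc ε^4 = ε^2 * ε^2 := by ring
      _ ≤ ε^2 * 1 := this
      _ = ε^2 := by ring
  have hre2 : r ≤ ε^2 := le_trans hre he42
  have hr1 : r ≤ 1/100 := by linarith only [hre2, hee, hεle, hε]
  set ρ : ℝ := 1 - r with hρdef
  clear_value ρ
  have hρ99 : (99:ℝ)/100 ≤ ρ := by rw [hρdef]; linarith only [hr1]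
  have h00 : (0:ℝ) ≤ ρ := by linarith only [hρ99]
  have h11 : ρ ≤ 1 := by rw [hρdef]; linarith only [hr0]
  have hρ0' : (0:ℝ) < ρ := by linarith only [hρ99]
  have hsρ1 : Real.sqrt ρ ≤ 1 := Real.sqrt_le_one.mpr h11
  have hsρ : ρ ≤ Real.sqrt ρ := by
    have t := mul_le_mul_of_nonneg_right hsρ1 (Real.sqrt_nonneg ρ)
    have t2 := Real.sq_sqrt h00
    nlinarith only [t, t2]
  set c : ℝ := Real.sqrt ρ - 3*ε with hcdef
  clear_value c
  have hc0 : (96:ℝ)/100 ≤ c := by rw [hcdef]; linarith only [hsρ, hρ99, hεle]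
  have hc1 : c ≤ 1 := by rw [hcdef]; linarith only [hsρ1, hε]
  set q : ℝ := ρ * r with hqdef
  clear_value q
  have hq0 : 0 < q := by rw [hqdef]; exact mul_pos hρ0' hr0
  have hq1 : q < 1 := by
    have t := mul_le_mul_of_nonneg_right h11 hr0.le
    rw [hqdef]
    nlinarith only [t, hr1]
  set u : ℕ → ℝ := fun k => q ^ (1/(2:ℝ)^k) with hudef
  clear_value u
  have h1' : u Kε ≤ ε := by simp only [hudef]; exact h1
  have h2' : ε ≤ u (Kε+1) := by simp only [hudef]; exact h2
  have hu_pos : ∀ k, 0 < u k := fun k => by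
    rw [hudef]; exact Real.rpow_pos_of_pos hq0 _
  have hu_lt1 : ∀ k, u k < 1 := fun k => by
    rw [hudef]; exact Real.rpow_lt_one hq0.le hq1 (by positivity)
  have husq : ∀ k, u (k+1)^2 = u k := by
    intro k
    have h2k : ((2:ℝ)^k) ≠ 0 := by positivity
    simp only [hudef]
    rw [← Real.rpow_natCast (q ^ (1/(2:ℝ)^(k+1))) 2, ← Real.rpow_mul hq0.le]
    congr 1
    push_cast
    rw [pow_succ]
    field_simp
  have hu_mono : Monotone u := monotone_nat_of_le_succ (fun k => by
    have t := mul_le_mul_of_nonneg_right (hu_lt1 (k+1)).le (hu_pos (k+1)).le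
    nlinarith only [t, husq k])
  have huKε : ∀ k, k ≤ Kε → u k ≤ ε := fun k hk => le_trans (hu_mono hk) h1'
  have hε2 : ε^2 ≤ u Kε := by
    have t := mul_le_mul h2' h2' hε.le (hu_pos (Kε+1)).le
    nlinarith only [t, husq Kε]
  have hsqrtu : ∀ k, Real.sqrt (u k) = u (k+1) := fun k => by
    rw [← husq k, Real.sqrt_sq (hu_pos (k+1)).le]
  have hu0 : u 0 = q := by rw [hudef]; norm_num
  have hp0 : pseq ρ 0 = 1 - ρ := rfl
  have hS0 : (pAux ρ 0).2 = 1 - ρ := rfl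
  -- main induction
  have key : ∀ k, k ≤ Kε →
      pseq ρ k ≤ u k / ρ ∧ (pAux ρ k).2 ≤ 2 * u k ∧ (1 ≤ k → c^2 * u k ≤ pseq ρ k) := by
    intro k
    induction k with
    | zero =>
      intro _
      refine ⟨?_, ?_, by omega⟩
      · have hqr : q / ρ = r := by rw [hqdef]; field_simp
        rw [hp0, hu0, hqr]
        linarith only [hρdef]
      · rw [hS0, hu0, hqdef]
        have t := mul_le_mul_of_nonneg_right hρ99 hr0.le
        linarith only [t, hρdef, hr0]
    | succ k ih =>
      intro hk
      obtain ⟨ih1, ih2, ih3⟩ := ih (Nat.le_of_succ_le hk)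
      have hu1e : u (k+1) ≤ ε := huKε _ hk
      have hup := pseq_succ_le h00 h11 k
      have hdown := pseq_succ_ge h00 h11 k
      have hupper : pseq ρ (k+1) ≤ u (k+1) / ρ := by
        have e1 : ρ * pseq ρ k ≤ u k := by
          have := mul_le_mul_of_nonneg_left ih1 h00
          rwa [mul_div_cancel₀ _ (ne_of_gt hρ0')] at this
        have e2 : Real.sqrt (ρ * pseq ρ k) ≤ u (k+1) := by
          calc Real.sqrt (ρ * pseq ρ k) ≤ Real.sqrt (u k) := Real.sqrt_le_sqrt e1
            _ = u (k+1) := hsqrtu k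
        have e3 : u (k+1) ≤ u (k+1)/ρ := by
          rw [le_div_iff₀ hρ0']
          have := mul_le_mul_of_nonneg_left h11 (hu_pos (k+1)).le
          linarith only [this]
        linarith only [hup, e2, e3]
      have hSrec : (pAux ρ (k+1)).2 = (pAux ρ k).2 + pseq ρ (k+1) := by
        simp only [pseq, pAux_succ]
      refine ⟨hupper, ?_, ?_⟩
      · rw [hSrec]
        have h2u : u k = u (k+1)^2 := (husq k).symm
        have e3 : u (k+1)/ρ ≤ u (k+1) * (100/99) := by
          rw [div_le_iff₀ hρ0']
          have := mul_le_mul_of_nonneg_left hρ99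
            (mul_nonneg (hu_pos (k+1)).le (by norm_num : (0:ℝ) ≤ 100/99))
          nlinarith only [this]
        have b1 : pseq ρ (k+1) ≤ u (k+1) * (100/99) := le_trans hupper e3
        have b3 : u (k+1)*u (k+1) ≤ ε * u (k+1) :=
          mul_le_mul_of_nonneg_right hu1e (hu_pos (k+1)).le
        have b4 : ε*u (k+1) ≤ (1/100)*u (k+1) :=
          mul_le_mul_of_nonneg_right hεle (hu_pos (k+1)).le
        nlinarith only [ih2, b1, b3, b4, h2u, hu_pos (k+1)]
      · intro _
        rcases Nat.eq_zero_or_pos k with hk0 | hk1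
        · subst hk0
          have hq_u1 : u 1 ^ 2 = q := by rw [husq 0, hu0]
          have hsq : Real.sqrt (ρ * pseq ρ 0) = u 1 := by
            rw [hp0, show ρ * (1 - ρ) = u 1 ^ 2 by rw [hq_u1, hqdef, hρdef]; ring,
              Real.sqrt_sq (hu_pos 1).le]
          have hb0 : (0:ℝ) ≤ 5*ε*u 1 :=
            mul_nonneg (by linarith only [hε]) (hu_pos 1).le
          have hsq2 : r^2 ≤ (5*ε*u 1)^2 := by
            have hq25 : (5*ε*u 1)^2 = 25*(ε^2*(ρ*r)) := by
              rw [show (5*ε*u 1)^2 = 25*(ε^2*(u 1^2)) by ring, hq_u1, hqdef]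
            have t1 : r*r ≤ ε^2*r := mul_le_mul_of_nonneg_right hre2 hr0.le
            have t2 := mul_le_mul_of_nonneg_left hρ99
              (mul_nonneg (sq_nonneg ε) hr0.le)
            have t3 : (0:ℝ) ≤ ε^2*r*ρ :=
              mul_nonneg (mul_nonneg (sq_nonneg ε) hr0.le) h00
            rw [hq25]
            nlinarith only [t1, t2, t3]
          have hr5 : r ≤ 5*ε*u 1 := by
            calc r = Real.sqrt (r^2) := (Real.sqrt_sq hr0.le).symm
              _ ≤ Real.sqrt ((5*ε*u 1)^2) := Real.sqrt_le_sqrt hsq2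
              _ = 5*ε*u 1 := Real.sqrt_sq hb0
          have h5 : 5*ε ≤ 1 - c^2 := by
            have h3e : 3*ε ≤ 1 - c := by rw [hcdef]; linarith only [hsρ1]
            have h1c : (196:ℝ)/100 ≤ 1 + c := by linarith only [hc0]
            have t1 : (3*ε)*(196/100) ≤ (1-c)*(1+c) :=
              mul_le_mul h3e h1c (by norm_num) (by linarith only [h3e, hε])
            nlinarith only [t1, hε]
          have hd := hdown
          rw [hsq, hS0] at hd
          have t := mul_le_mul_of_nonneg_right h5 (hu_pos 1).le
          nlinarith only [t, hr5, hd, hρdef]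
        · have hlow := ih3 hk1
          have e1 : ρ * (c^2 * u k) ≤ ρ * pseq ρ k := mul_le_mul_of_nonneg_left hlow h00
          have hcnn : (0:ℝ) ≤ c := by linarith only [hc0]
          have e2' : ρ * (c^2 * u k) = (Real.sqrt ρ * c * u (k+1))^2 := by
            calc ρ * (c^2 * u k) = (Real.sqrt ρ)^2 * (c^2 * u (k+1)^2) := by
                  rw [Real.sq_sqrt h00, husq k]
              _ = (Real.sqrt ρ * c * u (k+1))^2 := by ring
          have e2 : Real.sqrt (ρ * (c^2 * u k)) = Real.sqrt ρ * c * u (k+1) := by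
            rw [e2', Real.sqrt_sq
              (mul_nonneg (mul_nonneg (Real.sqrt_nonneg ρ) hcnn) (hu_pos (k+1)).le)]
          have e3 : Real.sqrt ρ * c * u (k+1) ≤ Real.sqrt (ρ * pseq ρ k) := by
            calc Real.sqrt ρ * c * u (k+1) = Real.sqrt (ρ * (c^2 * u k)) := e2.symm
              _ ≤ _ := Real.sqrt_le_sqrt e1
          have hid : Real.sqrt ρ = c + 3*ε := by rw [hcdef]; ring
          have hstep : Real.sqrt ρ * c * u (k+1) - 2 * u k ≤ pseq ρ (k+1) := by
            linarith only [hdown, e3, ih2]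
          rw [← husq k] at hstep
          have h3 : 2*u (k+1)^2 ≤ 3*(ε*c*u (k+1)) := by
            have t1 : u (k+1)*u (k+1) ≤ ε*u (k+1) :=
              mul_le_mul_of_nonneg_right hu1e (hu_pos (k+1)).le
            have t2 := mul_le_mul_of_nonneg_left hc0
              (mul_nonneg hε.le (hu_pos (k+1)).le)
            have t3 : (0:ℝ) ≤ ε*u (k+1) := mul_nonneg hε.le (hu_pos (k+1)).le
            nlinarith only [t1, t2, t3]
          have hexp : Real.sqrt ρ * c * u (k+1) = c^2*u (k+1) + 3*(ε*c*u (k+1)) := by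
            rw [hid]; ring
          linarith only [hstep, h3, hexp]
  have hgoal_id : ρ * (1 - 3*ε / Real.sqrt ρ)^2 = c^2 := by
    have hs0 : (0:ℝ) < Real.sqrt ρ := by linarith only [hsρ, hρ99]
    have hs1 : Real.sqrt ρ * (1 - 3*ε/Real.sqrt ρ) = Real.sqrt ρ - 3*ε := by
      field_simp
    calc ρ * (1 - 3*ε/Real.sqrt ρ)^2 = (Real.sqrt ρ)^2 * (1 - 3*ε/Real.sqrt ρ)^2 := by
          rw [Real.sq_sqrt h00]
      _ = (Real.sqrt ρ * (1 - 3*ε/Real.sqrt ρ))^2 := by ring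
      _ = c^2 := by rw [hs1, hcdef]
  rcases Nat.eq_zero_or_pos Kε with hK0 | hK1
  · subst hK0
    rw [hp0, hgoal_id]
    have hc2 : c^2 ≤ 1 := by
      have t := mul_le_mul hc1 hc1 (by linarith only [hc0]) (by norm_num)
      nlinarith only [t]
    have hεq : ε^2 ≤ q := by rw [← hu0]; exact hε2
    have t1 : c^2*ε^2 ≤ 1*ε^2 := mul_le_mul_of_nonneg_right hc2 (sq_nonneg ε)
    have t2 : ρ*r ≤ 1*r := mul_le_mul_of_nonneg_right h11 hr0.le
    nlinarith only [t1, t2, hεq, hqdef, hρdef]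
  · have hfin := (key Kε le_rfl).2.2 hK1
    calc ρ * (1 - 3*ε/Real.sqrt ρ)^2 * ε^2 = c^2 * ε^2 := by rw [hgoal_id]
      _ ≤ c^2 * u Kε := mul_le_mul_of_nonneg_left hε2 (sq_nonneg c)
      _ ≤ pseq ρ Kε := hfin

end MullerRatchet18
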